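/- The function T1 = q1 + q2 + q3 is a master symmetry generator of degree 1 for the Hamiltonian flow: Γ_H(T1) = J2 ≠ 0 in general, but Γ_H(Γ_H(T1)) = Γ_H(J2) = 0, i.e., the second time derivative of T1 along the flow vanishes. -/

import Mathlib

open scoped BigOperators

/-- Partial derivative of a function on phase space ℝ⁶ in the i-th coordinate. -/
noncomputable def pd (i : Fin 6) (f : (Fin 6 → ℝ) → ℝ) (x : Fin 6 → ℝ) : ℝ :=
  fderiv ℝ f x (Pi.single i 1)

/-- Canonical Poisson bracket on ℝ⁶ with coordinates (q1,q2,q3,p1,p2,p3). -/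
noncomputable def pb (F G : (Fin 6 → ℝ) → ℝ) (x : Fin 6 → ℝ) : ℝ :=
  (pd 0 F x * pd 3 G x - pd 3 F x * pd 0 G x) +
  (pd 1 F x * pd 4 G x - pd 4 F x * pd 1 G x) +
  (pd 2 F x * pd 5 G x - pd 5 F x * pd 2 G x)

/-- Angular momentum components: L1 = q2 p3 − q3 p2, etc. -/
def L1 (x : Fin 6 → ℝ) : ℝ := x 1 * x 5 - x 2 * x 4
def L2 (x : Fin 6 → ℝ) : ℝ := x 2 * x 3 - x 0 * x 5
def L3 (x : Fin 6 → ℝ) : ℝ := x 0 * x 4 - x 1 * x 3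

/-- The Hamiltonian of the coupled oscillators with magnetic terms. -/
noncomputable def Ham (b k : ℝ) (x : Fin 6 → ℝ) : ℝ :=
  (1/2) * (x 3 ^ 2 + x 4 ^ 2 + x 5 ^ 2) + b * (L1 x + L2 x + L3 x) +
  (1/2) * (b ^ 2 + k) * ((x 1 - x 0) ^ 2 + (x 2 - x 1) ^ 2 + (x 0 - x 2) ^ 2)

/-- J2 = p1 + p2 + p3. -/
def J2 (x : Fin 6 → ℝ) : ℝ := x 3 + x 4 + x 5

/-- J3 = L1 + L2 + L3. -/
def J3 (x : Fin 6 → ℝ) : ℝ := L1 x + L2 x + L3 x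

/-- T1 = q1 + q2 + q3. -/
def T1 (x : Fin 6 → ℝ) : ℝ := x 0 + x 1 + x 2

lemma pd_eq' {f : (Fin 6 → ℝ) → ℝ} {L : (Fin 6 → ℝ) →L[ℝ] ℝ} {x : Fin 6 → ℝ}
    (h : HasFDerivAt f L x) (i : Fin 6) : pd i f x = L (Pi.single i 1) := by
  rw [pd, h.fderiv]

lemma hproj' (j : Fin 6) (x : Fin 6 → ℝ) :
    HasFDerivAt (fun y : Fin 6 → ℝ => y j) (ContinuousLinearMap.proj j : (Fin 6 → ℝ) →L[ℝ] ℝ) x :=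
  (ContinuousLinearMap.proj j : (Fin 6 → ℝ) →L[ℝ] ℝ).hasFDerivAt

set_option maxHeartbeats 1000000 in
/-- T1 is a master-symmetry generator of degree 1: Γ_H(T1) = {T1,H} = J2 ≠ 0
in general, but Γ_H(Γ_H(T1)) = {J2,H} = 0. -/
theorem stmt12 :
    (∀ (b k : ℝ) (x : Fin 6 → ℝ), pb T1 (Ham b k) x = J2 x) ∧
    (∃ x : Fin 6 → ℝ, J2 x ≠ 0) ∧
    (∀ (b k : ℝ) (x : Fin 6 → ℝ), pb (fun y => pb T1 (Ham b k) y) (Ham b k) x = 0) := by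
  have main : ∀ (b k : ℝ) (x : Fin 6 → ℝ), pb T1 (Ham b k) x = J2 x := by
    intro b k x
    have hfun : Ham b k = (fun y : Fin 6 → ℝ =>
        (1/2) * (y 3 * y 3 + y 4 * y 4 + y 5 * y 5) +
        b * ((y 1 * y 5 - y 2 * y 4) + (y 2 * y 3 - y 0 * y 5) + (y 0 * y 4 - y 1 * y 3)) +
        (1/2 * (b ^ 2 + k)) * ((y 1 - y 0) * (y 1 - y 0) + (y 2 - y 1) * (y 2 - y 1) +
          (y 0 - y 2) * (y 0 - y 2))) := by
      funext y; simp only [Ham, L1, L2, L3]; ring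
    have hA := (((((hproj' 3 x).mul (hproj' 3 x)).add ((hproj' 4 x).mul (hproj' 4 x))).add
        ((hproj' 5 x).mul (hproj' 5 x)))).const_mul ((1:ℝ)/2)
    have hB := ((((hproj' 1 x).mul (hproj' 5 x)).sub ((hproj' 2 x).mul (hproj' 4 x))).add
        (((hproj' 2 x).mul (hproj' 3 x)).sub ((hproj' 0 x).mul (hproj' 5 x)))).add
        (((hproj' 0 x).mul (hproj' 4 x)).sub ((hproj' 1 x).mul (hproj' 3 x)))
    have hB' := hB.const_mul b
    have hC := ((((hproj' 1 x).sub (hproj' 0 x)).mul ((hproj' 1 x).sub (hproj' 0 x))).add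
        (((hproj' 2 x).sub (hproj' 1 x)).mul ((hproj' 2 x).sub (hproj' 1 x)))).add
        (((hproj' 0 x).sub (hproj' 2 x)).mul ((hproj' 0 x).sub (hproj' 2 x)))
    have hC' := hC.const_mul ((1:ℝ)/2 * (b ^ 2 + k))
    have hH := (hA.add hB').add hC'
    have hH := hH.congr_of_eventuallyEq (f₁ := Ham b k) (Filter.Eventually.of_forall fun y => (congrFun hfun y).trans rfl)
    have hT0 := ((hproj' 0 x).add (hproj' 1 x)).add (hproj' 2 x)
    have hT : HasFDerivAt T1 _ x := hT0
    simp only [pb, J2, pd_eq' hT, pd_eq' hH]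
    simp [Pi.single_apply]
    ring
  refine ⟨main, ⟨fun _ => 1, by norm_num [J2]⟩, ?_⟩
  intro b k x
  have hrepl : (fun y => pb T1 (Ham b k) y) = J2 := funext (main b k)
  rw [hrepl]
  have hfun : Ham b k = (fun y : Fin 6 → ℝ =>
      (1/2) * (y 3 * y 3 + y 4 * y 4 + y 5 * y 5) +
      b * ((y 1 * y 5 - y 2 * y 4) + (y 2 * y 3 - y 0 * y 5) + (y 0 * y 4 - y 1 * y 3)) +
      (1/2 * (b ^ 2 + k)) * ((y 1 - y 0) * (y 1 - y 0) + (y 2 - y 1) * (y 2 - y 1) +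
        (y 0 - y 2) * (y 0 - y 2))) := by
    funext y; simp only [Ham, L1, L2, L3]; ring
  have hA := (((((hproj' 3 x).mul (hproj' 3 x)).add ((hproj' 4 x).mul (hproj' 4 x))).add
      ((hproj' 5 x).mul (hproj' 5 x)))).const_mul ((1:ℝ)/2)
  have hB := ((((hproj' 1 x).mul (hproj' 5 x)).sub ((hproj' 2 x).mul (hproj' 4 x))).add
      (((hproj' 2 x).mul (hproj' 3 x)).sub ((hproj' 0 x).mul (hproj' 5 x)))).add
      (((hproj' 0 x).mul (hproj' 4 x)).sub ((hproj' 1 x).mul (hproj' 3 x)))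
  have hB' := hB.const_mul b
  have hC := ((((hproj' 1 x).sub (hproj' 0 x)).mul ((hproj' 1 x).sub (hproj' 0 x))).add
      (((hproj' 2 x).sub (hproj' 1 x)).mul ((hproj' 2 x).sub (hproj' 1 x)))).add
      (((hproj' 0 x).sub (hproj' 2 x)).mul ((hproj' 0 x).sub (hproj' 2 x)))
  have hC' := hC.const_mul ((1:ℝ)/2 * (b ^ 2 + k))
  have hH := (hA.add hB').add hC'
  have hH := hH.congr_of_eventuallyEq (f₁ := Ham b k) (Filter.Eventually.of_forall fun y => (congrFun hfun y).trans rfl)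
  have hJ0 := ((hproj' 3 x).add (hproj' 4 x)).add (hproj' 5 x)
  have hJ : HasFDerivAt J2 _ x := hJ0
  simp only [pb, pd_eq' hJ, pd_eq' hH]
  simp [Pi.single_apply]
  ring
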